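/- (Main Theorem 3.) Let u₁,u₂,v₁,v₂ ∈ ℂ with u₁,u₂,v₁,v₂ ∉ {0,1}, u₁ ≠ u₂, v₁ ≠ v₂, satisfying the modular equation (u₁−1)(u₂−1)(u₁−u₂) = (v₁−1)(v₂−1)(v₁−v₂). Define α := ((v₁−1)(v₂−1)(v₁+v₂−2) − (u₁−1)(u₂−1)(u₁+u₂−2))/(2(u₁−1)(u₂−1)(v₁−1)(v₂−1)), β := (−(v₁−1)(v₂−1)(2v₁v₂−v₁−v₂) + (u₁−1)(u₂−1)(2u₁u₂−u₁−u₂))/(2(u₁−1)(u₂−1)(v₁−1)(v₂−1)), γ := (v₁−1)(v₂−1)/((u₁−1)(u₂−1)). For (t₁,t₂) ∈ ℂ² with t₂ ≠ 0 and βt₁+(α+γ) ≠ 0, define w₁ := ((β+γ)t₁+α)/(βt₁+(α+γ)) and w₂ := t₁((β+γ)t₁+α)²(βt₁+(α+γ))/t₂⁵, and let J(t₁,t₂) := ∂_{t₁}w₁·∂_{t₂}w₂ − ∂_{t₁}w₂·∂_{t₂}w₁ be the Jacobian of the map (t₁,t₂) ↦ (w₁,w₂). Then the identity J(t₁,t₂)³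 · t₁²t₂²(1−t₁)(1−u₁t₁)(1−u₂t₁) = (−125·t₁³/t₂⁶) · w₁²w₂²(1−w₁)(1−v₁w₁)(1−v₂w₁) holds; equivalently, the differential form dw₁∧dw₂ divided by the cube root of w₁²w₂²(1−w₁)(1−v₁w₁)(1−v₂w₁) equals (−5t₁/t₂²) times dt₁∧dt₂ divided by the cube root of t₁²t₂²(1−t₁)(1−u₁t₁)(1−u₂t₁). -/

import Mathlib

open Complex Matrix

noncomputable section

/-- Partial derivative in the first complex variable. -/
def pdx (f : ℂ × ℂ → ℂ) (p : ℂ × ℂ) : ℂ := deriv (fun x => f (x, p.2)) p.1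

/-- Partial derivative in the second complex variable. -/
def pdy (f : ℂ × ℂ → ℂ) (p : ℂ × ℂ) : ℂ := deriv (fun y => f (p.1, y)) p.2

/-- The Jacobian `J(u₁,u₂) = ∂ₓu₁·∂ᵧu₂ − ∂ₓu₂·∂ᵧu₁`. -/
def Jac (u₁ u₂ : ℂ × ℂ → ℂ) (p : ℂ × ℂ) : ℂ :=
  pdx u₁ p * pdy u₂ p - pdx u₂ p * pdy u₁ p

/-- The GL(3) derivative `{u₁,u₂;x,y}ₓ`. -/
def brX (u₁ u₂ : ℂ × ℂ → ℂ) (p : ℂ × ℂ) : ℂ :=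
  (pdx u₁ p * pdx (pdx u₂) p - pdx u₂ p * pdx (pdx u₁) p) / Jac u₁ u₂ p

/-- The GL(3) derivative `{u₁,u₂;x,y}ᵧ`. -/
def brY (u₁ u₂ : ℂ × ℂ → ℂ) (p : ℂ × ℂ) : ℂ :=
  -(pdy u₁ p * pdy (pdy u₂) p - pdy u₂ p * pdy (pdy u₁) p) / Jac u₁ u₂ p

/-- The GL(3) derivative `[u₁,u₂;x,y]ₓ`. -/
def sqX (u₁ u₂ : ℂ × ℂ → ℂ) (p : ℂ × ℂ) : ℂ :=
  ((pdy u₁ p * pdx (pdx u₂) p - pdy u₂ p * pdx (pdx u₁) p)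
      + 2 * (pdx u₁ p * pdx (pdy u₂) p - pdx u₂ p * pdx (pdy u₁) p)) / Jac u₁ u₂ p

/-- The GL(3) derivative `[u₁,u₂;x,y]ᵧ`. -/
def sqY (u₁ u₂ : ℂ × ℂ → ℂ) (p : ℂ × ℂ) : ℂ :=
  -((pdx u₁ p * pdy (pdy u₂) p - pdx u₂ p * pdy (pdy u₁) p)
      + 2 * (pdy u₁ p * pdx (pdy u₂) p - pdy u₂ p * pdx (pdy u₁) p)) / Jac u₁ u₂ p

set_option maxHeartbeats 1000000 in
private theorem key0 (u₁ u₂ v₁ v₂ t : ℂ)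
    (hmod : (u₁ - 1) * (u₂ - 1) * (u₁ - u₂) = (v₁ - 1) * (v₂ - 1) * (v₁ - v₂)) :
    ((-((v₁-1)*(v₂-1)*(2*(v₁*v₂)-v₁-v₂)) + (u₁-1)*(u₂-1)*(2*(u₁*u₂)-u₁-u₂)) * t
      + ((v₁-1)*(v₂-1)*(v₁+v₂-2) - (u₁-1)*(u₂-1)*(u₁+u₂-2)) + 2*((v₁-1)*(v₂-1))^2
      - v₁ * (((-((v₁-1)*(v₂-1)*(2*(v₁*v₂)-v₁-v₂)) + (u₁-1)*(u₂-1)*(2*(u₁*u₂)-u₁-u₂)) + 2*((v₁-1)*(v₂-1))^2) * t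
        + ((v₁-1)*(v₂-1)*(v₁+v₂-2) - (u₁-1)*(u₂-1)*(u₁+u₂-2)))) *
    ((-((v₁-1)*(v₂-1)*(2*(v₁*v₂)-v₁-v₂)) + (u₁-1)*(u₂-1)*(2*(u₁*u₂)-u₁-u₂)) * t
      + ((v₁-1)*(v₂-1)*(v₁+v₂-2) - (u₁-1)*(u₂-1)*(u₁+u₂-2)) + 2*((v₁-1)*(v₂-1))^2
      - v₂ * (((-((v₁-1)*(v₂-1)*(2*(v₁*v₂)-v₁-v₂)) + (u₁-1)*(u₂-1)*(2*(u₁*u₂)-u₁-u₂)) + 2*((v₁-1)*(v₂-1))^2) * t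
        + ((v₁-1)*(v₂-1)*(v₁+v₂-2) - (u₁-1)*(u₂-1)*(u₁+u₂-2)))) =
    4 * ((u₁-1)*(u₂-1))^3 * ((v₁-1)*(v₂-1)) * (1 - u₁*t) * (1 - u₂*t) := by
  linear_combination (u₁^2*u₂*v₁*v₂*t^2 - 2*u₁^2*u₂*v₁*v₂*t + u₁^2*u₂*v₁*v₂ - u₁^2*u₂*v₁*t^2 + 2*u₁^2*u₂*v₁*t - u₁^2*u₂*v₁ - u₁^2*u₂*v₂*t^2 + 2*u₁^2*u₂*v₂*t - u₁^2*u₂*v₂ + u₁^2*u₂*t^2 - 2*u₁^2*u₂*t + u₁^2*u₂ - u₁^2*v₁*v₂*t^2 + 2*u₁^2*v₁*v₂*t - u₁^2*v₁*v₂ + u₁^2*v₁*t^2 - 2*u₁^2*v₁*t + u₁^2*v₁ + u₁^2*v₂*t^2 - 2*u₁^2*v₂*t + u₁^2*v₂ - u₁^2*t^2 + 2*u₁^2*t - u₁^2 - u₁*u₂^2*v₁*v₂*t^2 + 2*u₁*u₂^2*v₁*v₂*t - u₁*u₂^2*v₁*v₂ + u₁*u₂^2*v₁*t^2 - 2*u₁*u₂^2*v₁*t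 + u₁*u₂^2*v₁ + u₁*u₂^2*v₂*t^2 - 2*u₁*u₂^2*v₂*t + u₁*u₂^2*v₂ - u₁*u₂^2*t^2 + 2*u₁*u₂^2*t - u₁*u₂^2 + u₁*v₁*v₂*t^2 - 2*u₁*v₁*v₂*t + u₁*v₁*v₂ - u₁*v₁*t^2 + 2*u₁*v₁*t - u₁*v₁ - u₁*v₂*t^2 + 2*u₁*v₂*t - u₁*v₂ + u₁*t^2 - 2*u₁*t + u₁ + u₂^2*v₁*v₂*t^2 - 2*u₂^2*v₁*v₂*t + u₂^2*v₁*v₂ - u₂^2*v₁*t^2 + 2*u₂^2*v₁*t - u₂^2*v₁ - u₂^2*v₂*t^2 + 2*u₂^2*v₂*t - u₂^2*v₂ + u₂^2*t^2 - 2*u₂^2*t + u₂^2 - u₂*v₁*v₂*t^2 + 2*u₂*v₁*v₂*t - u₂*v₁*v₂ + u₂*v₁*t^2 - 2*u₂*v₁*t + u₂*v₁ + u₂*v₂*t^2 - 2*u₂*v₂*t + u₂*v₂ - u₂*t^2 + 2*u₂*t - u₂ + v₁^3*v₂^2*t^2 - 2*v₁^3*v₂^2*t + v₁^3*v₂^2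 - 2*v₁^3*v₂*t^2 + 4*v₁^3*v₂*t - 2*v₁^3*v₂ + v₁^3*t^2 - 2*v₁^3*t + v₁^3 - v₁^2*v₂^3*t^2 + 2*v₁^2*v₂^3*t - v₁^2*v₂^3 + 3*v₁^2*v₂*t^2 - 6*v₁^2*v₂*t + 3*v₁^2*v₂ - 2*v₁^2*t^2 + 4*v₁^2*t - 2*v₁^2 + 2*v₁*v₂^3*t^2 - 4*v₁*v₂^3*t + 2*v₁*v₂^3 - 3*v₁*v₂^2*t^2 + 6*v₁*v₂^2*t - 3*v₁*v₂^2 + v₁*t^2 - 2*v₁*t + v₁ - v₂^3*t^2 + 2*v₂^3*t - v₂^3 + 2*v₂^2*t^2 - 4*v₂^2*t + 2*v₂^2 - v₂*t^2 + 2*v₂*t - v₂) * hmod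

private theorem final_alg (u₁ u₂ v₁ v₂ s n d t₁ t₂ : ℂ) (ht2 : t₂ ≠ 0) (hd : d ≠ 0)
    (hmain : s^3*((1-t₁)*((1-u₁*t₁)*(1-u₂*t₁)))
      = (d - n)*((d - v₁*n)*(d - v₂*n))) :
    (s/d^2 * ((0*t₂^5 - t₁*n^2*d*(5*t₂^4))/(t₂^5)^2))^3 *
        (t₁^2*t₂^2*(1-t₁)*(1-u₁*t₁)*(1-u₂*t₁))
      = -125*t₁^3/t₂^6 *
        ((n/d)^2*(t₁*n^2*d/t₂^5)^2*(1-n/d)*(1-v₁*(n/d))*(1-v₂*(n/d))) := by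
  have hd6 : (d^6*t₂^30 : ℂ) ≠ 0 := mul_ne_zero (pow_ne_zero _ hd) (pow_ne_zero _ ht2)
  have hd5 : (d^5*t₂^16 : ℂ) ≠ 0 := mul_ne_zero (pow_ne_zero _ hd) (pow_ne_zero _ ht2)
  have hr0 : (1 - n/d) = (d-n)/d := by rw [sub_div, div_self hd]
  have hr1 : 1 - v₁*(n/d) = (d - v₁*n)/d := by rw [sub_div, div_self hd, mul_div_assoc]
  have hr2 : 1 - v₂*(n/d) = (d - v₂*n)/d := by rw [sub_div, div_self hd, mul_div_assoc]
  rw [hr0, hr1, hr2]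
  have e1 : (s/d^2 * ((0*t₂^5 - t₁*n^2*d*(5*t₂^4))/(t₂^5)^2))^3 *
        (t₁^2*t₂^2*(1-t₁)*(1-u₁*t₁)*(1-u₂*t₁))
      = (-125*s^3*t₁^5*n^6*d^3*t₂^14*((1-t₁)*((1-u₁*t₁)*(1-u₂*t₁))))/(d^6*t₂^30) := by
    ring
  have e2 : -125*t₁^3/t₂^6 *
        ((n/d)^2*(t₁*n^2*d/t₂^5)^2*((d-n)/d)*((d - v₁*n)/d)*((d - v₂*n)/d))
      = (-125*t₁^5*n^6*d^2*((d - n)*((d - v₁*n)*(d - v₂*n))))/(d^5*t₂^16) := by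
    ring
  rw [e1, e2, div_eq_div_iff hd6 hd5]
  linear_combination (-125*t₁^5*n^6*d^8*t₂^30)*hmain

/-- **Main Theorem 3.** The rational transformation of order five
between the two irrational differential forms attached to the algebraic surfaces with
moduli `(u₁,u₂)` and `(v₁,v₂)` satisfying the modular equation. The stated identity
is the cubed form of the differential-form identity. -/
theorem statement13 (u₁ u₂ v₁ v₂ : ℂ)
    (hu₁0 : u₁ ≠ 0) (hu₁1 : u₁ ≠ 1) (hu₂0 : u₂ ≠ 0) (hu₂1 : u₂ ≠ 1)
    (hv₁0 : v₁ ≠ 0) (hv₁1 : v₁ ≠ 1) (hv₂0 : v₂ ≠ 0) (hv₂1 : v₂ ≠ 1)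
    (huu : u₁ ≠ u₂) (hvv : v₁ ≠ v₂)
    (hmod : (u₁ - 1) * (u₂ - 1) * (u₁ - u₂) = (v₁ - 1) * (v₂ - 1) * (v₁ - v₂))
    (α β γ : ℂ)
    (hα : α = ((v₁ - 1) * (v₂ - 1) * (v₁ + v₂ - 2)
        - (u₁ - 1) * (u₂ - 1) * (u₁ + u₂ - 2))
        / (2 * (u₁ - 1) * (u₂ - 1) * (v₁ - 1) * (v₂ - 1)))
    (hβ : β = (-((v₁ - 1) * (v₂ - 1) * (2 * (v₁ * v₂) - v₁ - v₂))
        + (u₁ - 1) * (u₂ - 1) * (2 * (u₁ * u₂) - u₁ - u₂))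
        / (2 * (u₁ - 1) * (u₂ - 1) * (v₁ - 1) * (v₂ - 1)))
    (hγ : γ = (v₁ - 1) * (v₂ - 1) / ((u₁ - 1) * (u₂ - 1)))
    (w₁ w₂ : ℂ × ℂ → ℂ)
    (hw₁ : w₁ = fun t => ((β + γ) * t.1 + α) / (β * t.1 + (α + γ)))
    (hw₂ : w₂ = fun t =>
      t.1 * ((β + γ) * t.1 + α) ^ 2 * (β * t.1 + (α + γ)) / t.2 ^ 5) :
    ∀ t : ℂ × ℂ, t.2 ≠ 0 → β * t.1 + (α + γ) ≠ 0 →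
      (Jac w₁ w₂ t) ^ 3 *
          (t.1 ^ 2 * t.2 ^ 2 * (1 - t.1) * (1 - u₁ * t.1) * (1 - u₂ * t.1)) =
        (-125 * t.1 ^ 3 / t.2 ^ 6) *
          ((w₁ t) ^ 2 * (w₂ t) ^ 2 * (1 - w₁ t) * (1 - v₁ * w₁ t)
            * (1 - v₂ * w₁ t)) := by
  intro t ht2 hD
  have hE1 : u₁ - 1 ≠ 0 := sub_ne_zero.2 hu₁1
  have hE2 : u₂ - 1 ≠ 0 := sub_ne_zero.2 hu₂1
  have hF1 : v₁ - 1 ≠ 0 := sub_ne_zero.2 hv₁1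
  have hF2 : v₂ - 1 ≠ 0 := sub_ne_zero.2 hv₂1
  have hE : (u₁-1)*(u₂-1) ≠ 0 := mul_ne_zero hE1 hE2
  have hF : (v₁-1)*(v₂-1) ≠ 0 := mul_ne_zero hF1 hF2
  have h2EF : (2*(u₁-1)*(u₂-1)*(v₁-1)*(v₂-1) : ℂ) ≠ 0 :=
    mul_ne_zero (mul_ne_zero (mul_ne_zero (mul_ne_zero two_ne_zero hE1) hE2) hF1) hF2
  have ha : 2*(u₁-1)*(u₂-1)*(v₁-1)*(v₂-1)*α
      = (v₁-1)*(v₂-1)*(v₁+v₂-2) - (u₁-1)*(u₂-1)*(u₁+u₂-2) := by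
    rw [hα]; field_simp
  have hb : 2*(u₁-1)*(u₂-1)*(v₁-1)*(v₂-1)*β
      = -((v₁-1)*(v₂-1)*(2*(v₁*v₂)-v₁-v₂)) + (u₁-1)*(u₂-1)*(2*(u₁*u₂)-u₁-u₂) := by
    rw [hβ]; field_simp
  have hg : (u₁-1)*(u₂-1)*γ = (v₁-1)*(v₂-1) := by
    rw [hγ]; field_simp
  have hV₁ : 2*(u₁-1)*(u₂-1)*(v₁-1)*(v₂-1)*((β*t.1+(α+γ)) - v₁*((β+γ)*t.1+α))
      = ((-((v₁-1)*(v₂-1)*(2*(v₁*v₂)-v₁-v₂)) + (u₁-1)*(u₂-1)*(2*(u₁*u₂)-u₁-u₂)) * t.1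
        + ((v₁-1)*(v₂-1)*(v₁+v₂-2) - (u₁-1)*(u₂-1)*(u₁+u₂-2)) + 2*((v₁-1)*(v₂-1))^2
        - v₁ * (((-((v₁-1)*(v₂-1)*(2*(v₁*v₂)-v₁-v₂)) + (u₁-1)*(u₂-1)*(2*(u₁*u₂)-u₁-u₂)) + 2*((v₁-1)*(v₂-1))^2) * t.1
          + ((v₁-1)*(v₂-1)*(v₁+v₂-2) - (u₁-1)*(u₂-1)*(u₁+u₂-2)))) := by
    linear_combination ((1-v₁)*t.1)*hb + (1-v₁)*ha
      + (2*(v₁-1)*(v₂-1) - 2*v₁*(v₁-1)*(v₂-1)*t.1)*hg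
  have hV₂ : 2*(u₁-1)*(u₂-1)*(v₁-1)*(v₂-1)*((β*t.1+(α+γ)) - v₂*((β+γ)*t.1+α))
      = ((-((v₁-1)*(v₂-1)*(2*(v₁*v₂)-v₁-v₂)) + (u₁-1)*(u₂-1)*(2*(u₁*u₂)-u₁-u₂)) * t.1
        + ((v₁-1)*(v₂-1)*(v₁+v₂-2) - (u₁-1)*(u₂-1)*(u₁+u₂-2)) + 2*((v₁-1)*(v₂-1))^2
        - v₂ * (((-((v₁-1)*(v₂-1)*(2*(v₁*v₂)-v₁-v₂)) + (u₁-1)*(u₂-1)*(2*(u₁*u₂)-u₁-u₂)) + 2*((v₁-1)*(v₂-1))^2) * t.1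
          + ((v₁-1)*(v₂-1)*(v₁+v₂-2) - (u₁-1)*(u₂-1)*(u₁+u₂-2)))) := by
    linear_combination ((1-v₂)*t.1)*hb + (1-v₂)*ha
      + (2*(v₁-1)*(v₂-1) - 2*v₂*(v₁-1)*(v₂-1)*t.1)*hg
  have hV₁c : (β*t.1+(α+γ)) - v₁*((β+γ)*t.1+α)
      = (((-((v₁-1)*(v₂-1)*(2*(v₁*v₂)-v₁-v₂)) + (u₁-1)*(u₂-1)*(2*(u₁*u₂)-u₁-u₂)) * t.1
      + ((v₁-1)*(v₂-1)*(v₁+v₂-2) - (u₁-1)*(u₂-1)*(u₁+u₂-2)) + 2*((v₁-1)*(v₂-1))^2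
      - v₁ * (((-((v₁-1)*(v₂-1)*(2*(v₁*v₂)-v₁-v₂)) + (u₁-1)*(u₂-1)*(2*(u₁*u₂)-u₁-u₂)) + 2*((v₁-1)*(v₂-1))^2) * t.1
        + ((v₁-1)*(v₂-1)*(v₁+v₂-2) - (u₁-1)*(u₂-1)*(u₁+u₂-2))))) / (2*(u₁-1)*(u₂-1)*(v₁-1)*(v₂-1)) := by
    rw [eq_div_iff h2EF]; linear_combination hV₁
  have hV₂c : (β*t.1+(α+γ)) - v₂*((β+γ)*t.1+α)
      = (((-((v₁-1)*(v₂-1)*(2*(v₁*v₂)-v₁-v₂)) + (u₁-1)*(u₂-1)*(2*(u₁*u₂)-u₁-u₂)) * t.1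
      + ((v₁-1)*(v₂-1)*(v₁+v₂-2) - (u₁-1)*(u₂-1)*(u₁+u₂-2)) + 2*((v₁-1)*(v₂-1))^2
      - v₂ * (((-((v₁-1)*(v₂-1)*(2*(v₁*v₂)-v₁-v₂)) + (u₁-1)*(u₂-1)*(2*(u₁*u₂)-u₁-u₂)) + 2*((v₁-1)*(v₂-1))^2) * t.1
        + ((v₁-1)*(v₂-1)*(v₁+v₂-2) - (u₁-1)*(u₂-1)*(u₁+u₂-2))))) / (2*(u₁-1)*(u₂-1)*(v₁-1)*(v₂-1)) := by
    rw [eq_div_iff h2EF]; linear_combination hV₂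
  have hden : ((u₁-1)*(u₂-1)*(2*(u₁-1)*(u₂-1)*(v₁-1)*(v₂-1)*(2*(u₁-1)*(u₂-1)*(v₁-1)*(v₂-1))) : ℂ) ≠ 0 :=
    mul_ne_zero hE (mul_ne_zero h2EF h2EF)
  have hkey : γ*(((β*t.1+(α+γ)) - v₁*((β+γ)*t.1+α)) * ((β*t.1+(α+γ)) - v₂*((β+γ)*t.1+α)))
      = (1-u₁*t.1)*(1-u₂*t.1) := by
    rw [hV₁c, hV₂c, hγ, div_mul_div_comm, div_mul_div_comm, div_eq_iff hden,
      key0 u₁ u₂ v₁ v₂ t.1 hmod]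
    ring
  have hsum : 2*(u₁-1)*(u₂-1)*(v₁-1)*(v₂-1)*(α+β+γ) = 2*((u₁-1)*(u₂-1))^2 := by
    linear_combination ha + hb + (2*(v₁-1)*(v₂-1))*hg
  have hsumc : α+β+γ = (2*((u₁-1)*(u₂-1))^2) / (2*(u₁-1)*(u₂-1)*(v₁-1)*(v₂-1)) := by
    rw [eq_div_iff h2EF]; linear_combination hsum
  have h1 : γ*(α+β+γ) = 1 := by
    rw [hsumc, hγ, div_mul_div_comm, div_eq_one_iff_eq (mul_ne_zero hE h2EF)]
    ring
  have hmain : (γ*(α+β+γ))^3*((1-t.1)*((1-u₁*t.1)*(1-u₂*t.1)))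
      = ((β*t.1+(α+γ)) - ((β+γ)*t.1+α)) *
        (((β*t.1+(α+γ)) - v₁*((β+γ)*t.1+α)) * ((β*t.1+(α+γ)) - v₂*((β+γ)*t.1+α))) := by
    linear_combination
      ((1-t.1)*((1-u₁*t.1)*(1-u₂*t.1))*((γ*(α+β+γ))^2+γ*(α+β+γ)+1))*h1 - (1-t.1)*hkey
  subst hw₁ hw₂
  have hpx1 : pdx (fun t => ((β + γ) * t.1 + α) / (β * t.1 + (α + γ))) t
      = γ*(α+β+γ)/(β*t.1+(α+γ))^2 := by
    have ha1 : HasDerivAt (fun x : ℂ => (β+γ)*x+α) (β+γ) t.1 := by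
      simpa using ((hasDerivAt_id t.1).const_mul (β+γ)).add_const α
    have ha2 : HasDerivAt (fun x : ℂ => β*x+(α+γ)) β t.1 := by
      simpa using ((hasDerivAt_id t.1).const_mul β).add_const (α+γ)
    have h3 : deriv (fun x : ℂ => ((β+γ)*x+α)/(β*x+(α+γ))) t.1
        = ((β + γ) * (β * t.1 + (α + γ)) - ((β + γ) * t.1 + α) * β) / (β * t.1 + (α + γ)) ^ 2 :=
      (ha1.div ha2 hD).deriv
    unfold pdx
    rw [show (fun x => ((β + γ) * (x, t.2).1 + α) / (β * (x, t.2).1 + (α + γ)))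
        = (fun x : ℂ => ((β+γ)*x+α)/(β*x+(α+γ))) from rfl, h3]
    rw [div_eq_div_iff (pow_ne_zero _ hD) (pow_ne_zero _ hD)]
    ring
  have hpy1 : pdy (fun t => ((β + γ) * t.1 + α) / (β * t.1 + (α + γ))) t = 0 := by
    unfold pdy
    rw [show (fun y => ((β + γ) * (t.1, y).1 + α) / (β * (t.1, y).1 + (α + γ)))
        = (fun _ : ℂ => ((β+γ)*t.1+α)/(β*t.1+(α+γ))) from rfl, deriv_const]
  have hpy2 : pdy (fun t => t.1 * ((β + γ) * t.1 + α) ^ 2 * (β * t.1 + (α + γ)) / t.2 ^ 5) t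
      = (0*t.2^5 - t.1*((β+γ)*t.1+α)^2*(β*t.1+(α+γ))*(5*t.2^4))/(t.2^5)^2 := by
    have h5 : deriv (fun y : ℂ => (t.1*((β+γ)*t.1+α)^2*(β*t.1+(α+γ)))/y^5) t.2
        = (0 * t.2 ^ 5 - t.1 * ((β + γ) * t.1 + α) ^ 2 * (β * t.1 + (α + γ)) * (((5:ℕ):ℂ) * t.2 ^ (5 - 1))) / (t.2 ^ 5) ^ 2 :=
      ((hasDerivAt_const t.2 (t.1*((β+γ)*t.1+α)^2*(β*t.1+(α+γ)))).div
      (hasDerivAt_pow 5 t.2) (pow_ne_zero 5 ht2)).deriv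
    unfold pdy
    rw [show (fun y => (t.1, y).1 * ((β + γ) * (t.1, y).1 + α) ^ 2 * (β * (t.1, y).1 + (α + γ)) / (t.1, y).2 ^ 5)
        = (fun y : ℂ => (t.1*((β+γ)*t.1+α)^2*(β*t.1+(α+γ)))/y^5) from rfl, h5]
    norm_num
  simp only [Jac, hpx1, hpy1, hpy2, mul_zero, sub_zero]
  exact final_alg u₁ u₂ v₁ v₂ (γ*(α+β+γ)) ((β+γ)*t.1+α) (β*t.1+(α+γ)) t.1 t.2 ht2 hD hmain
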